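/- For all real parameters μ, ν, γ with 0 < μ ≤ 1, γ > 0, ν ≥ μγ, every real x ≥ 0, and every complex number s, the probability generating function of the fractional generalized probability distribution satisfies ∑_{n=0}^∞ s^n · Γ(ν) · (x^n / n!) · (d^n/dz^n E_{μ,ν}^γ)(−x) = Γ(ν) · E_{μ,ν}^γ(x(s − 1)). -/

import Mathlib

/-- The three-parameter Mittag-Leffler (Prabhakar) function
`E_{μ,ν}^γ(z) = ∑_{m=0}^∞ ((γ)_m / (m! Γ(μ m + ν))) z^m`,
where `(γ)_m = Γ(γ+m)/Γ(γ)`. -/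
noncomputable def prabhakar (μ ν γ : ℝ) (z : ℂ) : ℂ :=
  ∑' m : ℕ,
    (((Real.Gamma (γ + m) / Real.Gamma γ) / (m.factorial * Real.Gamma (μ * m + ν)) : ℝ) : ℂ)
      * z ^ m

open Filter Topology

/-- Log-convexity interpolation bound for the Gamma function:
`t Γ(t) ≤ Γ(t+μ) (t+μ)^(1-μ)` for `0 < μ ≤ 1`, `0 < t`. -/
lemma gamma_interp_bound {μ t : ℝ} (hμ0 : 0 < μ) (hμ1 : μ ≤ 1) (ht : 0 < t) :
    t * Real.Gamma t ≤ Real.Gamma (t + μ) * (t + μ) ^ (1 - μ) := by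
  have htμ : 0 < t + μ := by linarith
  have hG1 : 0 < Real.Gamma (t + μ) := Real.Gamma_pos_of_pos htμ
  have hG2 : 0 < Real.Gamma (t + μ + 1) := Real.Gamma_pos_of_pos (by linarith)
  have hG3 : 0 < Real.Gamma (t + 1) := Real.Gamma_pos_of_pos (by linarith)
  have hconv := Real.convexOn_log_Gamma.2 (Set.mem_Ioi.mpr htμ)
    (Set.mem_Ioi.mpr (show (0:ℝ) < t + μ + 1 by linarith)) hμ0.le
    (by linarith : (0:ℝ) ≤ 1 - μ) (by ring)
  have harg : μ • (t + μ) + (1 - μ) • (t + μ + 1) = t + 1 := by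
    simp only [smul_eq_mul]; ring
  rw [harg] at hconv
  simp only [Function.comp_apply, smul_eq_mul] at hconv
  rw [← Real.log_rpow hG1 μ, ← Real.log_rpow hG2 (1 - μ),
    ← Real.log_mul (Real.rpow_pos_of_pos hG1 μ).ne' (Real.rpow_pos_of_pos hG2 (1 - μ)).ne']
    at hconv
  have hexp := Real.exp_le_exp.mpr hconv
  rw [Real.exp_log hG3, Real.exp_log (by positivity)] at hexp
  rw [Real.Gamma_add_one ht.ne'] at hexp
  rw [Real.Gamma_add_one htμ.ne', Real.mul_rpow htμ.le hG1.le] at hexp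
  calc t * Real.Gamma t
      ≤ Real.Gamma (t + μ) ^ μ * ((t + μ) ^ (1 - μ) * Real.Gamma (t + μ) ^ (1 - μ)) := hexp
    _ = Real.Gamma (t + μ) * (t + μ) ^ (1 - μ) := by
        rw [mul_comm ((t + μ) ^ (1 - μ)) _, ← mul_assoc, ← Real.rpow_add hG1]
        norm_num

/-- The Prabhakar function is entire. -/
lemma prabhakar_differentiable (μ ν γ : ℝ) (hμ0 : 0 < μ) (hμ1 : μ ≤ 1) (hγ : 0 < γ)
    (hν : μ * γ ≤ ν) : Differentiable ℂ (prabhakar μ ν γ) := by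
  have hν0 : 0 < ν := lt_of_lt_of_le (mul_pos hμ0 hγ) hν
  set a : ℕ → ℝ := fun m =>
    (Real.Gamma (γ + m) / Real.Gamma γ) / (m.factorial * Real.Gamma (μ * m + ν)) with ha
  set c : ℕ → ℂ := fun m => ((a m : ℝ) : ℂ) with hc
  have hγm : ∀ m : ℕ, (0:ℝ) < γ + m := fun m => by positivity
  have htm : ∀ m : ℕ, (0:ℝ) < μ * m + ν := fun m => by positivity
  have hapos : ∀ m, 0 < a m := by
    intro m
    have h1 := Real.Gamma_pos_of_pos (hγm m)
    have h2 := Real.Gamma_pos_of_pos hγ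
    have h3 := Real.Gamma_pos_of_pos (htm m)
    have h4 : (0:ℝ) < m.factorial := by positivity
    positivity
  -- recurrence for the coefficients
  have hrec : ∀ m : ℕ, a (m + 1)
      = a m * ((γ + m) / (m + 1)) * (Real.Gamma (μ * m + ν) / Real.Gamma (μ * m + ν + μ)) := by
    intro m
    have h1 : Real.Gamma (γ + ((m:ℕ) + 1 : ℕ)) = (γ + m) * Real.Gamma (γ + m) := by
      push_cast
      rw [show γ + ((m:ℝ) + 1) = (γ + m) + 1 by ring, Real.Gamma_add_one (hγm m).ne']
    have h2 : μ * ((m:ℕ) + 1 : ℕ) + ν = μ * m + ν + μ := by push_cast; ring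
    have hΓγ := (Real.Gamma_pos_of_pos hγ).ne'
    have hΓ3 := (Real.Gamma_pos_of_pos (htm m)).ne'
    have hΓ4 := (Real.Gamma_pos_of_pos (show (0:ℝ) < μ * m + ν + μ by positivity)).ne'
    have hfac : ((m.factorial : ℝ)) ≠ 0 := by positivity
    have hm1 : ((m:ℝ) + 1) ≠ 0 := by positivity
    simp only [ha, h1, h2, Nat.factorial_succ]
    push_cast
    field_simp
  -- the ratio of consecutive coefficients tends to zero
  have hratio : Tendsto (fun m : ℕ => ‖c (m + 1)‖ / ‖c m‖) atTop (𝓝 0) := by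
    have hnorm : ∀ m, ‖c m‖ = a m := fun m => by
      simp [hc, Complex.norm_real, abs_of_pos (hapos m)]
    have hfle : ∀ᶠ m : ℕ in atTop, ‖c (m + 1)‖ / ‖c m‖
        ≤ max γ 1 * (2 * (μ * m + ν + μ) ^ (-μ)) := by
      filter_upwards [eventually_ge_atTop 1] with m hm
      have hm1 : (1:ℝ) ≤ m := by exact_mod_cast hm
      set t : ℝ := μ * m + ν with htdef
      have ht : 0 < t := htm m
      have htμ : 0 < t + μ := by linarith
      have hμt : μ ≤ t := by
        have : μ * 1 ≤ μ * m := by nlinarith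
        simp only [htdef]; nlinarith
      have hG1 : 0 < Real.Gamma t := Real.Gamma_pos_of_pos ht
      have hG2 : 0 < Real.Gamma (t + μ) := Real.Gamma_pos_of_pos htμ
      have hkey : Real.Gamma t / Real.Gamma (t + μ) ≤ 2 * (t + μ) ^ (-μ) := by
        have h1 : Real.Gamma t / Real.Gamma (t + μ) ≤ (t + μ) ^ (1 - μ) / t := by
          rw [div_le_div_iff₀ hG2 ht]
          have := gamma_interp_bound hμ0 hμ1 ht
          nlinarith [this]
        refine h1.trans ?_
        have h2 : (t + μ) ^ (1 - μ) = (t + μ) * (t + μ) ^ (-μ) := by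
          rw [show (1 - μ) = 1 + (-μ) by ring, Real.rpow_add htμ, Real.rpow_one]
        rw [h2]
        rw [div_le_iff₀ ht]
        have hpow : 0 ≤ (t + μ) ^ (-μ) := (Real.rpow_pos_of_pos htμ _).le
        nlinarith [hpow]
      have hfrac : (γ + m) / (m + 1) ≤ max γ 1 := by
        rw [div_le_iff₀ (by positivity : (0:ℝ) < (m:ℝ) + 1)]
        have h1 : γ ≤ max γ 1 := le_max_left _ _
        have h2 : (1:ℝ) ≤ max γ 1 := le_max_right _ _
        nlinarith [Nat.cast_nonneg (α := ℝ) m]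
      have heq : ‖c (m + 1)‖ / ‖c m‖
          = (γ + m) / (m + 1) * (Real.Gamma t / Real.Gamma (t + μ)) := by
        rw [hnorm, hnorm, hrec m, mul_assoc, mul_comm (a m), mul_div_assoc,
          div_self (hapos m).ne', mul_one]
      rw [heq]
      have h0a : (0:ℝ) ≤ (γ + m) / (m + 1) := by positivity
      have h0b : (0:ℝ) ≤ Real.Gamma t / Real.Gamma (t + μ) := by positivity
      exact mul_le_mul hfrac hkey h0b (le_trans h0a hfrac)
    have hg0 : Tendsto (fun m : ℕ => max γ 1 * (2 * (μ * m + ν + μ) ^ (-μ))) atTop (𝓝 0) := by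
      have h1 : Tendsto (fun m : ℕ => μ * (m:ℝ) + ν + μ) atTop atTop := by
        apply tendsto_atTop_add_const_right
        apply tendsto_atTop_add_const_right
        exact (tendsto_natCast_atTop_atTop).const_mul_atTop hμ0
      have h2 : Tendsto (fun m : ℕ => (μ * (m:ℝ) + ν + μ) ^ (-μ)) atTop (𝓝 0) :=
        (tendsto_rpow_neg_atTop hμ0).comp h1
      simpa using (h2.const_mul 2).const_mul (max γ 1)
    exact squeeze_zero' (Eventually.of_forall fun m => by positivity) hfle hg0
  have hcne : ∀ᶠ m : ℕ in atTop, c m ≠ 0 :=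
    Eventually.of_forall fun m => Complex.ofReal_ne_zero.mpr (hapos m).ne'
  have hrad : (FormalMultilinearSeries.ofScalars ℂ c).radius = ⊤ :=
    FormalMultilinearSeries.ofScalars_radius_eq_top_of_tendsto ℂ c hcne hratio
  have hball : HasFPowerSeriesOnBall (FormalMultilinearSeries.ofScalars ℂ c).sum
      (FormalMultilinearSeries.ofScalars ℂ c) 0 ⊤ := by
    have := (FormalMultilinearSeries.ofScalars ℂ c).hasFPowerSeriesOnBall
      (by rw [hrad]; exact ENNReal.zero_lt_top)
    rwa [hrad] at this
  have hfun : prabhakar μ ν γ = (FormalMultilinearSeries.ofScalars ℂ c).sum := by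
    funext z
    have := FormalMultilinearSeries.ofScalars_sum_eq c z
    rw [FormalMultilinearSeries.ofScalarsSum] at this
    rw [this]
    simp only [prabhakar, smul_eq_mul, hc, ha]
  rw [hfun]
  intro z
  exact (hball.differentiableOn z (EMetric.mem_ball.mpr (edist_lt_top z 0))).differentiableAt
    (EMetric.isOpen_ball.mem_nhds (EMetric.mem_ball.mpr (edist_lt_top z 0)))

/-- Probability generating function:
`∑_n s^n Γ(ν) (x^n/n!) (d^n/dz^n E_{μ,ν}^γ)(−x) = Γ(ν) E_{μ,ν}^γ(x(s−1))`. -/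
theorem prabhakar_pgf (μ ν γ : ℝ) (hμ0 : 0 < μ) (hμ1 : μ ≤ 1) (hγ : 0 < γ)
    (hν : μ * γ ≤ ν) (x : ℝ) (hx : 0 ≤ x) (s : ℂ) :
    ∑' n : ℕ, s ^ n * ((Real.Gamma ν * (x ^ n / n.factorial) : ℝ) : ℂ)
        * iteratedDeriv n (prabhakar μ ν γ) (-(x : ℂ))
      = (Real.Gamma ν : ℂ) * prabhakar μ ν γ ((x : ℂ) * (s - 1)) := by
  have hdiff : Differentiable ℂ (prabhakar μ ν γ) :=
    prabhakar_differentiable μ ν γ hμ0 hμ1 hγ hν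
  have htay := Complex.taylorSeries_eq_of_entire' (-(x:ℂ)) ((x:ℂ) * (s - 1)) hdiff
  calc ∑' n : ℕ, s ^ n * ((Real.Gamma ν * (x ^ n / n.factorial) : ℝ) : ℂ)
        * iteratedDeriv n (prabhakar μ ν γ) (-(x : ℂ))
      = ∑' n : ℕ, (Real.Gamma ν : ℂ) * ((n.factorial : ℂ)⁻¹
          * iteratedDeriv n (prabhakar μ ν γ) (-(x:ℂ)) * ((x:ℂ) * (s - 1) - -(x:ℂ)) ^ n) := by
        refine tsum_congr fun n => ?_
        rw [show ((x:ℂ) * (s - 1) - -(x:ℂ)) = (x:ℂ) * s by ring, mul_pow]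
        push_cast
        ring
    _ = (Real.Gamma ν : ℂ) * ∑' n : ℕ, ((n.factorial : ℂ)⁻¹
          * iteratedDeriv n (prabhakar μ ν γ) (-(x:ℂ)) * ((x:ℂ) * (s - 1) - -(x:ℂ)) ^ n) :=
        tsum_mul_left
    _ = (Real.Gamma ν : ℂ) * prabhakar μ ν γ ((x : ℂ) * (s - 1)) := by rw [htay]
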